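/- Let M be a real, continuous, square-integrable martingale with M_0 = 0 and quadratic variation [M]. Given β ≥ 0 and C > 0, for any bounded stopping time τ and any ℓ > 0, P( sup_{t ≤ τ} M_t > ℓ and [M]_τ ≤ β·sup_{t≤τ} M_t + C ) ≤ exp( - ℓ² / (2(βℓ + C)) ). -/

import Mathlib

open MeasureTheory Set Filter Topology
open scoped ENNReal NNReal

noncomputable section
namespace Stmt7Aux


lemma exp_taylor {x : ℝ} (hx : |x| ≤ 1) : Real.exp x ≤ 1 + x + x ^ 2 / 2 + |x| ^ 3 := by
  have h := Real.exp_bound hx (by norm_num : 0 < 3)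
  have h2 : |Real.exp x - ∑ i ∈ Finset.range 3, x ^ i / i.factorial| ≤ |x| ^ 3 * ((3:ℕ).succ / ((3:ℕ).factorial * 3)) := h
  have hs : (∑ i ∈ Finset.range 3, x ^ i / i.factorial) = 1 + x + x ^ 2 / 2 := by
    simp [Finset.sum_range_succ]
  rw [hs] at h2
  have h4 : ((3:ℕ).succ : ℝ) / ((3:ℕ).factorial * (3:ℝ)) ≤ 1 := by
    norm_num [Nat.factorial]
  have h5 := (abs_le.mp h2).2
  nlinarith [pow_nonneg (abs_nonneg x) 3]

lemma step_bound {a b η : ℝ} (ha : |a| ≤ η) (hb0 : 0 ≤ b) (hbη : b ≤ η) (hη : η ≤ 1/2) :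
    Real.exp (a - b) ≤ 1 + a + (1/2 + 4*η) * a ^ 2 + (5*η - 1) * b := by
  have hη0 : 0 ≤ η := le_trans (abs_nonneg a) ha
  have hab : |a - b| ≤ 2 * η := by
    have := abs_le.mp ha
    rw [abs_le]; constructor <;> nlinarith
  have h1 : Real.exp (a - b) ≤ 1 + (a - b) + (a - b) ^ 2 / 2 + |a - b| ^ 3 :=
    exp_taylor (by linarith)
  have h3 : |a - b| ^ 3 ≤ (2*η) * (a - b) ^ 2 := by
    have h4 : |a - b| ^ 3 = |a - b| * (a-b)^2 := by
      rw [← sq_abs]; ring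
    rw [h4]
    have : (0:ℝ) ≤ (a-b)^2 := sq_nonneg _
    nlinarith
  have h5 := abs_le.mp ha
  nlinarith [sq_nonneg (a - b), sq_nonneg a, mul_nonneg hη0 hb0]




variable {Ω : Type*} {m : MeasurableSpace Ω} {P : Measure Ω} [IsProbabilityMeasure P]
  {ℱ : Filtration ℝ m}

abbrev wt (S : Ω → ℝ) : Ω → WithTop ℝ := fun ω => (S ω : WithTop ℝ)

lemma wt_le {S : Ω → ℝ} {b : ℝ} (h : ∀ ω, S ω ≤ b) : ∀ ω, wt S ω ≤ (b : WithTop ℝ) :=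
  fun ω => WithTop.coe_le_coe.mpr (h ω)

lemma wt_mono {S R : Ω → ℝ} (h : ∀ ω, S ω ≤ R ω) : wt S ≤ wt R :=
  fun ω => WithTop.coe_le_coe.mpr (h ω)

lemma wt_of {S : Ω → ℝ} (h : ∀ t : ℝ, MeasurableSet[ℱ t] {ω | S ω ≤ t}) :
    IsStoppingTime ℱ (wt S) := fun t => by
  simpa only [wt, WithTop.coe_le_coe] using h t

lemma wt_measurableSet_le {S : Ω → ℝ} (hS : IsStoppingTime ℱ (wt S)) (t : ℝ) :
    MeasurableSet[ℱ t] {ω | S ω ≤ t} := by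
  simpa only [wt, WithTop.coe_le_coe] using hS.measurableSet_le t

lemma wt_min {S R : Ω → ℝ} (hS : IsStoppingTime ℱ (wt S)) (hR : IsStoppingTime ℱ (wt R)) :
    IsStoppingTime ℱ (wt fun ω => min (S ω) (R ω)) := by
  refine wt_of fun t => ?_
  have := (wt_measurableSet_le hS t).union (wt_measurableSet_le hR t)
  simpa only [min_le_iff, Set.setOf_or] using this

lemma wt_max {S R : Ω → ℝ} (hS : IsStoppingTime ℱ (wt S)) (hR : IsStoppingTime ℱ (wt R)) :
    IsStoppingTime ℱ (wt fun ω => max (S ω) (R ω)) := by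
  refine wt_of fun t => ?_
  have := (wt_measurableSet_le hS t).inter (wt_measurableSet_le hR t)
  simpa only [max_le_iff, Set.setOf_and] using this

lemma wt_min_const {S : Ω → ℝ} (hS : IsStoppingTime ℱ (wt S)) (b : ℝ) :
    IsStoppingTime ℱ (wt fun ω => min (S ω) b) :=
  wt_min (R := fun _ => b) hS (isStoppingTime_const ℱ b)

lemma wt_max_const {S : Ω → ℝ} (hS : IsStoppingTime ℱ (wt S)) (b : ℝ) :
    IsStoppingTime ℱ (wt fun ω => max (S ω) b) :=
  wt_max (R := fun _ => b) hS (isStoppingTime_const ℱ b)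

noncomputable def dy (n : ℕ) (S : Ω → ℝ) (b : ℝ) : Ω → ℝ :=
  fun ω => min ((⌈S ω * 2 ^ n⌉ : ℝ) / 2 ^ n) b

lemma dy_le_iff {n : ℕ} {x t : ℝ} :
    (⌈x * 2 ^ n⌉ : ℝ) / 2 ^ n ≤ t ↔ x ≤ (⌊t * 2 ^ n⌋ : ℝ) / 2 ^ n := by
  rw [div_le_iff₀ (by positivity), le_div_iff₀ (by positivity)]
  constructor
  · intro h
    have h2 : (⌈x * 2 ^ n⌉ : ℤ) ≤ ⌊t * 2 ^ n⌋ := Int.le_floor.mpr h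
    calc x * 2 ^ n ≤ (⌈x * 2 ^ n⌉ : ℝ) := Int.le_ceil _
      _ ≤ ((⌊t * 2 ^ n⌋ : ℤ) : ℝ) := by exact_mod_cast h2
  · intro h
    have h2 : (⌈x * 2 ^ n⌉ : ℤ) ≤ ⌊t * 2 ^ n⌋ := Int.ceil_le.mpr h
    calc (⌈x * 2 ^ n⌉ : ℝ) ≤ ((⌊t * 2 ^ n⌋ : ℤ) : ℝ) := by exact_mod_cast h2
      _ ≤ t * 2 ^ n := Int.floor_le _

lemma dy_isStoppingTime {S : Ω → ℝ} (hS : IsStoppingTime ℱ (wt S)) (n : ℕ) (b : ℝ) :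
    IsStoppingTime ℱ (wt (dy n S b)) := by
  refine wt_min_const (S := fun ω => (⌈S ω * 2 ^ n⌉ : ℝ) / 2 ^ n) ?_ b
  refine wt_of fun t => ?_
  have hset : {ω | (⌈S ω * 2 ^ n⌉ : ℝ) / 2 ^ n ≤ t} = {ω | S ω ≤ (⌊t * 2 ^ n⌋ : ℝ) / 2 ^ n} := by
    ext ω; exact dy_le_iff
  show MeasurableSet[ℱ t] {ω | (⌈S ω * 2 ^ n⌉ : ℝ) / 2 ^ n ≤ t}
  rw [hset]
  have hle : (⌊t * 2 ^ n⌋ : ℝ) / 2 ^ n ≤ t := by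
    rw [div_le_iff₀ (by positivity)]; exact Int.floor_le _
  exact ℱ.mono hle _ (wt_measurableSet_le hS _)

lemma le_dy {S : Ω → ℝ} {b : ℝ} (hSb : ∀ ω, S ω ≤ b) (n : ℕ) (ω : Ω) :
    S ω ≤ dy n S b ω := by
  refine le_min ?_ (hSb ω)
  rw [le_div_iff₀ (by positivity)]
  exact Int.le_ceil _

lemma dy_le {S : Ω → ℝ} {b : ℝ} (n : ℕ) (ω : Ω) : dy n S b ω ≤ b := min_le_right _ _

lemma dy_countable_range (n : ℕ) (S : Ω → ℝ) (b : ℝ) : (Set.range (dy n S b)).Countable := by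
  have : Set.range (dy n S b) ⊆ Set.range (fun z : ℤ => min ((z : ℝ) / 2 ^ n) b) := by
    rintro x ⟨ω, rfl⟩
    exact ⟨⌈S ω * 2 ^ n⌉, rfl⟩
  exact (Set.countable_range _).mono this

lemma tendsto_dy {S : Ω → ℝ} {b : ℝ} (hSb : ∀ ω, S ω ≤ b) (ω : Ω) :
    Tendsto (fun n => dy n S b ω) atTop (𝓝 (S ω)) := by
  have hub : ∀ n : ℕ, dy n S b ω ≤ S ω + (1 / 2) ^ n := by
    intro n
    refine (min_le_left _ _).trans ?_
    rw [div_le_iff₀ (by positivity)]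
    have := Int.ceil_lt_add_one (S ω * 2 ^ n)
    have h2 : ((1:ℝ) / 2) ^ n * 2 ^ n = 1 := by
      rw [one_div, inv_pow, inv_mul_cancel₀ (by positivity)]
    nlinarith [this]
  have h1 : Tendsto (fun n : ℕ => S ω + (1 / 2) ^ n) atTop (𝓝 (S ω + 0)) :=
    tendsto_const_nhds.add (tendsto_pow_atTop_nhds_zero_of_lt_one (by norm_num) (by norm_num))
  rw [add_zero] at h1
  exact tendsto_of_tendsto_of_tendsto_of_le_of_le tendsto_const_nhds h1
    (fun n => le_dy hSb n ω) hub

/-- Key optional sampling identity: for a continuous martingale `f`, a bounded stopping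
time `S` and a bounded `F_S`-measurable `Y`, `∫ Y · f_S = ∫ Y · f_b`. -/
lemma sampling (f : ℝ → Ω → ℝ) (hf : Martingale f ℱ P) (hfc : ∀ ω, Continuous fun t => f t ω)
    {S : Ω → ℝ} (hS : IsStoppingTime ℱ (wt S)) {b : ℝ} (hSb : ∀ ω, S ω ≤ b)
    {Y : Ω → ℝ} (hY : StronglyMeasurable[hS.measurableSpace] Y) {c : ℝ}
    (hYb : ∀ ω, |Y ω| ≤ c) :
    Integrable (stoppedValue f (wt S)) P ∧
      ∫ ω, Y ω * stoppedValue f (wt S) ω ∂P = ∫ ω, Y ω * f b ω ∂P := by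
  have hprog : ProgMeasurable ℱ f := hf.stronglyAdapted.progMeasurable_of_continuous hfc
  have hne : Nonempty Ω := by
    by_contra h
    rw [not_nonempty_iff] at h
    have h1 : (P univ) = 1 := measure_univ
    rw [show (univ : Set Ω) = ∅ from Set.univ_eq_empty_iff.mpr h, measure_empty] at h1
    exact zero_ne_one h1
  have hc0 : 0 ≤ c := le_trans (abs_nonneg _) (hYb hne.some)
  set Sn : ℕ → Ω → ℝ := fun n => dy n S b with hSn_def
  have hSn : ∀ n, IsStoppingTime ℱ (wt (Sn n)) := fun n => dy_isStoppingTime hS n b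
  have hSnb : ∀ n ω, Sn n ω ≤ b := fun n ω => dy_le n ω
  have hSSn : ∀ n ω, S ω ≤ Sn n ω := fun n ω => le_dy hSb n ω
  -- conditional expectations
  set g : ℕ → Ω → ℝ := fun n => P[f b | (hSn n).measurableSpace] with hg_def
  haveI : ∀ n, SigmaFinite (P.trim ((hSn n).measurableSpace_le_of_le (wt_le (hSnb n)))) :=
    fun n => by infer_instance
  have key : ∀ n, stoppedValue f (wt (Sn n)) =ᵐ[P] g n := fun n =>
    hf.stoppedValue_ae_eq_condExp_of_le_const_of_countable_range (hSn n) (wt_le (hSnb n))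
      (((dy_countable_range n S b).image (fun x : ℝ => (x : WithTop ℝ))).mono
        (by rintro _ ⟨ω, rfl⟩; exact ⟨_, ⟨ω, rfl⟩, rfl⟩))
  have hYmeas : ∀ n, StronglyMeasurable[(hSn n).measurableSpace] Y := fun n =>
    hY.mono (IsStoppingTime.measurableSpace_mono hS (hSn n) (wt_mono (hSSn n)))
  have hYaem : AEStronglyMeasurable Y P :=
    (hY.mono (hS.measurableSpace_le_of_le (wt_le hSb))).aestronglyMeasurable
  have hYbdd : ∀ᵐ ω ∂P, ‖Y ω‖ ≤ c := Filter.Eventually.of_forall fun ω => hYb ω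
  have intfb : Integrable (f b) P := hf.integrable b
  have intYfb : Integrable (fun ω => Y ω * f b ω) P := intfb.bdd_mul hYaem hYbdd
  -- each approximation integral equals ∫ Y * f b
  have heq : ∀ n, ∫ ω, Y ω * g n ω ∂P = ∫ ω, Y ω * f b ω ∂P := by
    intro n
    have hpull : P[fun ω => Y ω * f b ω | (hSn n).measurableSpace] =ᵐ[P]
        fun ω => Y ω * g n ω := by
      exact condExp_mul_of_stronglyMeasurable_left (hYmeas n) intYfb intfb
    calc ∫ ω, Y ω * g n ω ∂P
        = ∫ ω, (P[fun ω => Y ω * f b ω | (hSn n).measurableSpace]) ω ∂P :=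
          (integral_congr_ae hpull).symm
      _ = ∫ ω, Y ω * f b ω ∂P :=
          integral_condExp ((hSn n).measurableSpace_le_of_le (wt_le (hSnb n)))
  -- uniform integrability
  have hui : UniformIntegrable g 1 P :=
    intfb.uniformIntegrable_condExp fun n => (hSn n).measurableSpace_le_of_le (wt_le (hSnb n))
  -- a.e. convergence of g n to stoppedValue f (wt S)
  have hptconv : ∀ ω, Tendsto (fun n => stoppedValue f (wt (Sn n)) ω) atTop
      (𝓝 (stoppedValue f (wt S) ω)) := by
    intro ω
    have : Tendsto (fun n => Sn n ω) atTop (𝓝 (S ω)) := tendsto_dy hSb ω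
    exact ((hfc ω).tendsto (S ω)).comp this
  have hconv : ∀ᵐ ω ∂P, Tendsto (fun n => g n ω) atTop (𝓝 (stoppedValue f (wt S) ω)) := by
    have hae : ∀ᵐ ω ∂P, ∀ n, stoppedValue f (wt (Sn n)) ω = g n ω := by
      rw [ae_all_iff]; exact fun n => key n
    filter_upwards [hae] with ω hω
    have := hptconv ω
    simpa only [funext fun n => hω n] using this
  -- `stoppedValue f (wt S)` is in L¹
  have hprogmeas : AEStronglyMeasurable (stoppedValue f (wt S)) P :=
    ((stronglyMeasurable_stoppedValue_of_le hprog hS (wt_le hSb)).mono (ℱ.le b)).aestronglyMeasurable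
  have hgmeas : ∀ n, AEStronglyMeasurable (g n) P := fun n =>
    stronglyMeasurable_condExp.mono ((hSn n).measurableSpace_le_of_le (wt_le (hSnb n)))
      |>.aestronglyMeasurable
  have hmemlp : MemLp (stoppedValue f (wt S)) 1 P := by
    refine ⟨hprogmeas, ?_⟩
    have h1 : eLpNorm (stoppedValue f (wt S)) 1 P ≤ atTop.liminf fun n => eLpNorm (g n) 1 P :=
      Lp.eLpNorm_lim_le_liminf_eLpNorm hgmeas _ hconv
    have h2 : (atTop.liminf fun n => eLpNorm (g n) 1 P) ≤ eLpNorm (f b) 1 P := by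
      refine (Filter.liminf_le_liminf (Filter.Eventually.of_forall fun n =>
        eLpNorm_one_condExp_le_eLpNorm _)).trans ?_
      simp [Filter.liminf_const]
    exact lt_of_le_of_lt (h1.trans h2) (memLp_one_iff_integrable.mpr intfb).2
  have hint : Integrable (stoppedValue f (wt S)) P := memLp_one_iff_integrable.mp hmemlp
  refine ⟨hint, ?_⟩
  -- Vitali convergence
  have hLp : Tendsto (fun n => eLpNorm (g n - stoppedValue f (wt S)) 1 P) atTop (𝓝 0) :=
    tendsto_Lp_finite_of_tendsto_ae le_rfl ENNReal.one_ne_top hgmeas hmemlp hui.2.1 hconv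
  -- convergence of integrals
  have hIconv : Tendsto (fun n => ∫ ω, Y ω * g n ω ∂P) atTop (𝓝 (∫ ω, Y ω * stoppedValue f (wt S) ω ∂P)) := by
    have hgint : ∀ n, Integrable (fun ω => Y ω * g n ω) P := fun n =>
      (integrable_condExp).bdd_mul hYaem hYbdd
    have hsub : ∀ n, (∫ ω, Y ω * g n ω ∂P) - (∫ ω, Y ω * stoppedValue f (wt S) ω ∂P)
        = ∫ ω, Y ω * (g n ω - stoppedValue f (wt S) ω) ∂P := by
      intro n
      rw [← integral_sub (hgint n) (hint.bdd_mul hYaem hYbdd)]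
      congr 1; ext ω; ring
    rw [show (∫ ω, Y ω * stoppedValue f (wt S) ω ∂P) =
      (∫ ω, Y ω * stoppedValue f (wt S) ω ∂P) + 0 by ring]
    have : Tendsto (fun n => ∫ ω, Y ω * (g n ω - stoppedValue f (wt S) ω) ∂P) atTop (𝓝 0) := by
      have hb2 : ∀ n, |∫ ω, Y ω * (g n ω - stoppedValue f (wt S) ω) ∂P|
          ≤ c * (eLpNorm (g n - stoppedValue f (wt S)) 1 P).toReal := by
        intro n
        have hintd : Integrable (g n - stoppedValue f (wt S)) P :=
          integrable_condExp.sub hint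
        calc |∫ ω, Y ω * (g n ω - stoppedValue f (wt S) ω) ∂P|
            ≤ ∫ ω, |Y ω| * |g n ω - stoppedValue f (wt S) ω| ∂P := by
              simpa [Real.norm_eq_abs, abs_mul] using
                norm_integral_le_integral_norm (fun ω => Y ω * (g n ω - stoppedValue f (wt S) ω)) (μ := P)
          _ ≤ ∫ ω, c * |g n ω - stoppedValue f (wt S) ω| ∂P := by
              refine integral_mono_of_nonneg (Filter.Eventually.of_forall fun ω => by positivity)
                (hintd.abs.const_mul c) (Filter.Eventually.of_forall fun ω => ?_)
              dsimp only
              exact mul_le_mul_of_nonneg_right (hYb ω) (abs_nonneg _)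
          _ = c * ∫ ω, |g n ω - stoppedValue f (wt S) ω| ∂P := integral_const_mul c _
          _ = c * (eLpNorm (g n - stoppedValue f (wt S)) 1 P).toReal := by
              congr 1
              have h5 : eLpNorm (g n - stoppedValue f (wt S)) 1 P
                  = ENNReal.ofReal (∫ ω, ‖(g n - stoppedValue f (wt S)) ω‖ ∂P) := by
                rw [eLpNorm_one_eq_lintegral_enorm,
                  ← ofReal_integral_norm_eq_lintegral_enorm hintd]
              rw [h5, ENNReal.toReal_ofReal (integral_nonneg fun ω => norm_nonneg _)]
              simp [Real.norm_eq_abs]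
      have htr : Tendsto (fun n => c * (eLpNorm (g n - stoppedValue f (wt S)) 1 P).toReal)
          atTop (𝓝 (c * 0)) := by
        refine Tendsto.const_mul c ?_
        have := (ENNReal.tendsto_toReal ENNReal.zero_ne_top).comp hLp
        simpa [Function.comp_def] using this
      rw [mul_zero] at htr
      exact squeeze_zero_norm (fun n => by simpa [Real.norm_eq_abs] using hb2 n) htr
    exact (tendsto_const_nhds.add this).congr (fun n => by rw [← hsub n]; ring)
  have hfinal : Tendsto (fun _ : ℕ => ∫ ω, Y ω * f b ω ∂P) atTop (𝓝 (∫ ω, Y ω * stoppedValue f (wt S) ω ∂P)) :=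
    hIconv.congr fun n => heq n
  exact tendsto_nhds_unique hfinal tendsto_const_nhds




lemma sampling₂ (f : ℝ → Ω → ℝ) (hf : Martingale f ℱ P) (hfc : ∀ ω, Continuous fun t => f t ω)
    {S₁ S₂ : Ω → ℝ} (h₁ : IsStoppingTime ℱ (wt S₁)) (h₂ : IsStoppingTime ℱ (wt S₂))
    (h12 : ∀ ω, S₁ ω ≤ S₂ ω) {b : ℝ} (hb : ∀ ω, S₂ ω ≤ b)
    {Y : Ω → ℝ} (hY : StronglyMeasurable[h₁.measurableSpace] Y) {c : ℝ}
    (hYb : ∀ ω, |Y ω| ≤ c) :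
    ∫ ω, Y ω * stoppedValue f (wt S₂) ω ∂P = ∫ ω, Y ω * stoppedValue f (wt S₁) ω ∂P := by
  rw [(sampling f hf hfc h₂ hb (hY.mono (IsStoppingTime.measurableSpace_mono h₁ h₂ (wt_mono h12))) hYb).2,
    (sampling f hf hfc h₁ (fun ω => (h12 ω).trans (hb ω)) hY hYb).2]



/-- first time in `[S ω, cap]` where `c ≤ G (X t ω) (X (S ω) ω)`, or `cap` if none. -/
noncomputable def hit (X : ℝ → Ω → ℝ × ℝ) (G : ℝ × ℝ → ℝ × ℝ → ℝ) (c : ℝ)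
    (S : Ω → ℝ) (cap : ℝ) : Ω → ℝ :=
  fun ω => sInf ({t | t ∈ Icc (S ω) cap ∧ c ≤ G (X t ω) (X (S ω) ω)} ∪ {cap})

section Hit

variable {X : ℝ → Ω → ℝ × ℝ} {G : ℝ × ℝ → ℝ × ℝ → ℝ} {c : ℝ} {S : Ω → ℝ} {cap : ℝ}

lemma hit_bddBelow (ω : Ω) (hScap : S ω ≤ cap) :
    BddBelow ({t | t ∈ Icc (S ω) cap ∧ c ≤ G (X t ω) (X (S ω) ω)} ∪ {cap}) := by
  refine ⟨S ω, ?_⟩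
  rintro t (⟨⟨h1, _⟩, _⟩ | rfl)
  · exact h1
  · exact hScap

lemma le_hit (ω : Ω) (hScap : S ω ≤ cap) : S ω ≤ hit X G c S cap ω := by
  refine le_csInf (by simp) ?_
  rintro t (⟨⟨h1, _⟩, _⟩ | rfl)
  · exact h1
  · exact hScap

lemma hit_le_cap (ω : Ω) (hScap : S ω ≤ cap) : hit X G c S cap ω ≤ cap :=
  csInf_le (hit_bddBelow ω hScap) (by simp)

lemma hit_le (ω : Ω) (hScap : S ω ≤ cap) {u : ℝ} (hu : u ∈ Icc (S ω) cap)
    (hcu : c ≤ G (X u ω) (X (S ω) ω)) : hit X G c S cap ω ≤ u :=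
  csInf_le (hit_bddBelow ω hScap) (Or.inl ⟨hu, hcu⟩)

lemma hit_lt (ω : Ω) (hScap : S ω ≤ cap) {t : ℝ} (h1 : S ω ≤ t)
    (h2 : t < hit X G c S cap ω) : G (X t ω) (X (S ω) ω) < c := by
  by_contra h
  push_neg at h
  exact absurd (hit_le ω hScap ⟨h1, h2.le.trans (hit_le_cap ω hScap)⟩ h) (not_le.mpr h2)

lemma hit_hits (hXc : ∀ ω, Continuous fun t => X t ω)
    (hG : Continuous fun p : (ℝ × ℝ) × (ℝ × ℝ) => G p.1 p.2)
    (ω : Ω) (hScap : S ω ≤ cap)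
    (h : ∃ u ∈ Icc (S ω) cap, c ≤ G (X u ω) (X (S ω) ω)) :
    c ≤ G (X (hit X G c S cap ω) ω) (X (S ω) ω) := by
  have hφ : Continuous fun t => G (X t ω) (X (S ω) ω) := by
    exact hG.comp ((hXc ω).prodMk continuous_const)
  set A := {t | t ∈ Icc (S ω) cap ∧ c ≤ G (X t ω) (X (S ω) ω)} with hA
  have hAne : A.Nonempty := by
    obtain ⟨u, hu, hcu⟩ := h; exact ⟨u, hu, hcu⟩
  have hAclosed : IsClosed A := by
    have : A = Icc (S ω) cap ∩ {t | c ≤ G (X t ω) (X (S ω) ω)} := rfl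
    rw [this]
    exact isClosed_Icc.inter (isClosed_le continuous_const hφ)
  have hAbdd : BddBelow A := ⟨S ω, fun t ht => ht.1.1⟩
  have hmem : sInf A ∈ A := hAclosed.csInf_mem hAne hAbdd
  have heq : hit X G c S cap ω = sInf A := by
    rw [hit, ← hA, csInf_union hAbdd hAne ⟨cap, fun t ht => ht.ge⟩ (by simp)]
    simp only [csInf_singleton]
    exact min_eq_left hmem.1.2
  rw [heq]
  exact hmem.2

lemma hit_not (hXc : ∀ ω, Continuous fun t => X t ω)
    (hG : Continuous fun p : (ℝ × ℝ) × (ℝ × ℝ) => G p.1 p.2)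
    (ω : Ω) (hScap : S ω ≤ cap) (h : hit X G c S cap ω < cap) :
    c ≤ G (X (hit X G c S cap ω) ω) (X (S ω) ω) := by
  refine hit_hits hXc hG ω hScap ?_
  by_contra hempty
  push_neg at hempty
  have : hit X G c S cap ω = cap := by
    have h1 : {t | t ∈ Icc (S ω) cap ∧ c ≤ G (X t ω) (X (S ω) ω)} = ∅ := by
      ext t
      simp only [Set.mem_setOf_eq, Set.mem_empty_iff_false, iff_false, not_and]
      exact fun ht => not_le.mpr (hempty t ht) |>.elim ∘ id
    rw [hit, h1, Set.empty_union, csInf_singleton]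
  exact absurd this (ne_of_lt h)

/-- On `[S ω, hit ω]` the value of `G` stays `≤ c`, provided it starts `≤ c`. -/
lemma hit_cont_le (hXc : ∀ ω, Continuous fun t => X t ω)
    (hG : Continuous fun p : (ℝ × ℝ) × (ℝ × ℝ) => G p.1 p.2)
    (ω : Ω) (hScap : S ω ≤ cap) (hSS : G (X (S ω) ω) (X (S ω) ω) ≤ c)
    {t : ℝ} (ht : t ∈ Icc (S ω) (hit X G c S cap ω)) :
    G (X t ω) (X (S ω) ω) ≤ c := by
  have hφ : Continuous fun s => G (X s ω) (X (S ω) ω) :=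
    hG.comp ((hXc ω).prodMk continuous_const)
  rcases eq_or_lt_of_le ht.1 with heq | hlt
  · rw [← heq]; exact hSS
  rcases lt_or_eq_of_le ht.2 with hlt2 | heq2
  · exact (hit_lt ω hScap ht.1 hlt2).le
  · -- t = hit ω > S ω : limit from the left
    refine le_of_tendsto (hφ.continuousWithinAt (s := Iio t)) ?_
    filter_upwards [Ioo_mem_nhdsLT_of_mem (show t ∈ Ioc (S ω) t from ⟨hlt, le_refl t⟩)]
      with s hs
    exact (hit_lt ω hScap hs.1.le (heq2 ▸ hs.2)).le

lemma hit_isStoppingTime (hXc : ∀ ω, Continuous fun t => X t ω)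
    (hXa : StronglyAdapted ℱ X)
    (hG : Continuous fun p : (ℝ × ℝ) × (ℝ × ℝ) => G p.1 p.2)
    (hS : IsStoppingTime ℱ (wt S)) (hScap : ∀ ω, S ω ≤ cap) :
    IsStoppingTime ℱ (wt (hit X G c S cap)) := by
  have hprog : ProgMeasurable ℱ X := hXa.progMeasurable_of_continuous hXc
  refine wt_of fun t => ?_
  by_cases hcap : cap ≤ t
  · have : {ω | hit X G c S cap ω ≤ t} = univ := by
      ext ω
      simp only [Set.mem_setOf_eq, Set.mem_univ, iff_true]
      exact (hit_le_cap ω (hScap ω)).trans hcap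
    rw [this]
    exact MeasurableSet.univ
  push_neg at hcap
  -- clamp stopping times
  set R : ℚ → Ω → ℝ := fun q ω => min (max (S ω) (q : ℝ)) t with hR
  have hRst : ∀ q : ℚ, IsStoppingTime ℱ (wt (R q)) := fun q =>
    wt_min_const (wt_max_const hS (q : ℝ)) t
  have hRle : ∀ q ω, R q ω ≤ t := fun q ω => min_le_right _ _
  have hSmin : IsStoppingTime ℱ (wt fun ω => min (S ω) t) := wt_min_const hS t
  -- the scanning function
  set V : ℚ → Ω → ℝ := fun q ω => G (X (R q ω) ω) (X (min (S ω) t) ω) with hV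
  have hVmeas : ∀ q : ℚ, StronglyMeasurable[ℱ t] (V q) := by
    intro q
    have h1 : StronglyMeasurable[ℱ t] (stoppedValue X (wt (R q))) :=
      stronglyMeasurable_stoppedValue_of_le hprog (hRst q) (wt_le (hRle q))
    have h2 : StronglyMeasurable[ℱ t] (stoppedValue X (wt fun ω => min (S ω) t)) :=
      stronglyMeasurable_stoppedValue_of_le hprog hSmin (wt_le fun ω => min_le_right _ _)
    exact hG.comp_stronglyMeasurable (h1.prodMk h2)
  set F : Ω → ℝ≥0∞ := fun ω => ⨆ q : ℚ, ENNReal.ofReal (V q ω - c + 1) with hF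
  have hFmeas : Measurable[ℱ t] F := by
    refine Measurable.iSup fun q => ?_
    exact ((hVmeas q).measurable.sub measurable_const).add measurable_const
      |>.ennreal_ofReal
  have hkey : {ω | hit X G c S cap ω ≤ t} = {ω | S ω ≤ t} ∩ {ω | 1 ≤ F ω} := by
    ext ω
    simp only [Set.mem_setOf_eq, Set.mem_inter_iff]
    have hφ : Continuous fun s => G (X s ω) (X (S ω) ω) :=
      hG.comp ((hXc ω).prodMk continuous_const)
    constructor
    · intro hle
      have hSt : S ω ≤ t := (le_hit ω (hScap ω)).trans hle
      refine ⟨hSt, ?_⟩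
      have hSmin_eq : min (S ω) t = S ω := min_eq_left hSt
      have hlt : hit X G c S cap ω < cap := lt_of_le_of_lt hle hcap
      have hprop := hit_not hXc hG ω (hScap ω) hlt
      set s₀ := hit X G c S cap ω with hs₀
      have hs₀mem : s₀ ∈ Icc (S ω) t := ⟨le_hit ω (hScap ω), hle⟩
      -- rationals approaching s₀
      have hseq : ∀ n : ℕ, ∃ q : ℚ, s₀ - 1/(n+1) < (q:ℝ) ∧ (q:ℝ) < s₀ + 1/(n+1) := by
        intro n
        obtain ⟨q, hq1, hq2⟩ := exists_rat_btwn
          (show s₀ - 1/(n+1) < s₀ + 1/(n+1) by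
            have : (0:ℝ) < 1/(n+1) := by positivity
            linarith)
        exact ⟨q, hq1, hq2⟩
      choose qs hqs1 hqs2 using hseq
      have hqconv : Tendsto (fun n : ℕ => (qs n : ℝ)) atTop (𝓝 s₀) := by
        have h1 : Tendsto (fun n : ℕ => s₀ - 1/(n+1)) atTop (𝓝 (s₀ - 0)) :=
          tendsto_const_nhds.sub tendsto_one_div_add_atTop_nhds_zero_nat
        have h2 : Tendsto (fun n : ℕ => s₀ + 1/(n+1)) atTop (𝓝 (s₀ + 0)) :=
          tendsto_const_nhds.add tendsto_one_div_add_atTop_nhds_zero_nat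
        rw [sub_zero] at h1; rw [add_zero] at h2
        exact tendsto_of_tendsto_of_tendsto_of_le_of_le h1 h2
          (fun n => (hqs1 n).le) (fun n => (hqs2 n).le)
      have hclampconv : Tendsto (fun n : ℕ => R (qs n) ω) atTop (𝓝 s₀) := by
        have hcont : Continuous fun x : ℝ => min (max (S ω) x) t :=
          (continuous_const.max continuous_id).min continuous_const
        have : Tendsto (fun n : ℕ => min (max (S ω) ((qs n : ℝ))) t) atTop
            (𝓝 (min (max (S ω) s₀) t)) := (hcont.tendsto s₀).comp hqconv
        simpa [max_eq_right hs₀mem.1, min_eq_left hs₀mem.2] using this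
      have hVconv : Tendsto (fun n : ℕ => ENNReal.ofReal (V (qs n) ω - c + 1)) atTop
          (𝓝 (ENNReal.ofReal (G (X s₀ ω) (X (S ω) ω) - c + 1))) := by
        refine (ENNReal.continuous_ofReal.tendsto _).comp ?_
        have := (hφ.tendsto s₀).comp hclampconv
        simp only [hV, hSmin_eq]
        exact Tendsto.add (Tendsto.sub this tendsto_const_nhds) tendsto_const_nhds
      have hlim_le : ENNReal.ofReal (G (X s₀ ω) (X (S ω) ω) - c + 1) ≤ F ω :=
        le_of_tendsto hVconv (Filter.Eventually.of_forall fun n => le_iSup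
          (fun q : ℚ => ENNReal.ofReal (V q ω - c + 1)) (qs n))
      refine le_trans ?_ hlim_le
      rw [show (1:ℝ≥0∞) = ENNReal.ofReal 1 by simp]
      exact ENNReal.ofReal_le_ofReal (by linarith)
    · rintro ⟨hSt, hsup⟩
      by_contra hnot
      push_neg at hnot
      have hSmin_eq : min (S ω) t = S ω := min_eq_left hSt
      -- max of φ on [S ω, t]
      obtain ⟨s₀, hs₀mem, hs₀max⟩ := isCompact_Icc.exists_isMaxOn
        (Set.nonempty_Icc.mpr hSt) (hφ.continuousOn (s := Icc (S ω) t))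
      have hs₀lt : G (X s₀ ω) (X (S ω) ω) < c :=
        hit_lt ω (hScap ω) hs₀mem.1 (lt_of_le_of_lt hs₀mem.2 hnot)
      have hFle : F ω ≤ ENNReal.ofReal (G (X s₀ ω) (X (S ω) ω) - c + 1) := by
        refine iSup_le fun q => ?_
        refine ENNReal.ofReal_le_ofReal ?_
        have hmem : R q ω ∈ Icc (S ω) t := ⟨le_min (le_max_left _ _) hSt, min_le_right _ _⟩
        have := hs₀max hmem
        simp only [hV, hSmin_eq]
        simp only [Set.mem_setOf_eq] at this
        linarith
      have : F ω < 1 := lt_of_le_of_lt hFle (by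
        rw [ENNReal.ofReal_lt_one]; linarith)
      exact absurd hsup (not_le.mpr this)
  rw [hkey]
  exact (wt_measurableSet_le hS t).inter (hFmeas measurableSet_Ici)

end Hit

section Core

set_option maxHeartbeats 1600000 in
/-- Core exponential supermartingale estimate: if `lam M - lam²/2 Q ≤ g` up to the bounded
stopping time `U`, then `E[exp(lam M_U - lam²/2 Q_U)] ≤ 1`. -/
lemma core (M Q : ℝ → Ω → ℝ)
    (hM : Martingale M ℱ P)
    (hMcont : ∀ ω, Continuous fun t => M t ω)
    (hM0 : ∀ ω, M 0 ω = 0)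
    (hQV : Martingale (fun t ω => (M t ω) ^ 2 - Q t ω) ℱ P)
    (hQcont : ∀ ω, Continuous fun t => Q t ω)
    (hQmono : ∀ ω, Monotone fun t => Q t ω)
    (hQ0 : ∀ ω, Q 0 ω = 0)
    {lam g cap : ℝ} (hlam : 0 < lam) (hg : 0 < g) (hcap : 0 ≤ cap)
    (hQint : Integrable (Q cap) P)
    {U : Ω → ℝ} (hUst : IsStoppingTime ℱ (wt U)) (hU0 : ∀ ω, 0 ≤ U ω) (hUcap : ∀ ω, U ω ≤ cap)
    (hXle : ∀ ω, ∀ t ∈ Icc 0 (U ω), lam * M t ω - lam ^ 2 / 2 * Q t ω ≤ g) :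
    ∫ ω, Real.exp (lam * M (U ω) ω - lam ^ 2 / 2 * Q (U ω) ω) ∂P ≤ 1 := by
  classical
  -- the pair process
  set X : ℝ → Ω → ℝ × ℝ := fun t ω => (M t ω, Q t ω) with hX
  have hXc : ∀ ω, Continuous fun t => X t ω := fun ω => (hMcont ω).prodMk (hQcont ω)
  have hQad : StronglyAdapted ℱ Q := by
    intro t
    have h1 := hM.stronglyAdapted t
    have h2 := hQV.stronglyAdapted t
    have : Q t = fun ω => M t ω * M t ω - (M t ω ^ 2 - Q t ω) := by ext ω; ring
    rw [this]
    exact (h1.mul h1).sub h2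
  have hXa : StronglyAdapted ℱ X := fun t => (hM.stronglyAdapted t).prodMk (hQad t)
  have hprogX : ProgMeasurable ℱ X := hXa.progMeasurable_of_continuous hXc
  -- the companion martingale
  set N : ℝ → Ω → ℝ := fun t ω => (M t ω) ^ 2 - Q t ω with hN
  have hNmart : Martingale N ℱ P := hQV
  have hNcont : ∀ ω, Continuous fun t => N t ω := fun ω => ((hMcont ω).pow 2).sub (hQcont ω)
  -- nonnegativity and integral of Q cap
  have hQcap0 : ∀ ω, 0 ≤ Q cap ω := fun ω => by
    have h := hQmono ω hcap
    simp only [hQ0 ω] at h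
    exact h
  have hVq0 : 0 ≤ ∫ ω, Q cap ω ∂P := integral_nonneg hQcap0
  set Vq : ℝ := ∫ ω, Q cap ω ∂P with hVq
  -- helper : integrability of bounded a.e.-strongly measurable functions
  have intbdd : ∀ (f : Ω → ℝ) (c : ℝ), AEStronglyMeasurable f P → (∀ ω, |f ω| ≤ c) →
      Integrable f P := fun f c hmeas hb =>
    (integrable_const c).mono' hmeas (Filter.Eventually.of_forall fun ω => by
      rw [Real.norm_eq_abs]; exact hb ω)
  -- the key ε-estimate
  have keyε : ∀ ε : ℝ, 0 < ε → (lam + lam ^ 2 / 2) * ε ≤ 1 / 2 →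
      ∫ ω, Real.exp (lam * M (U ω) ω - lam ^ 2 / 2 * Q (U ω) ω) ∂P
        ≤ 1 + 13 * ((lam + lam ^ 2 / 2) * ε) / 2 * lam ^ 2 * Real.exp g * Vq := by
    intro ε hε hεhalf
    set η : ℝ := (lam + lam ^ 2 / 2) * ε with hη_def
    have hη0 : 0 < η := by positivity
    -- oscillation comparison function
    set Gosc : ℝ × ℝ → ℝ × ℝ → ℝ := fun p p0 => max |p.1 - p0.1| |p.2 - p0.2| with hGosc
    have hGosc_cont : Continuous fun p : (ℝ × ℝ) × (ℝ × ℝ) => Gosc p.1 p.2 := by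
      apply Continuous.max
      · exact (continuous_fst.fst.sub continuous_snd.fst).abs
      · exact (continuous_fst.snd.sub continuous_snd.snd).abs
    have hGosc_dist : ∀ p p0 : ℝ × ℝ, Gosc p p0 = dist p p0 := by
      intro p p0
      rw [Prod.dist_eq, Real.dist_eq, Real.dist_eq]
    -- the random partition
    set T : ℕ → Ω → ℝ := fun k => Nat.rec (fun _ => (0:ℝ))
      (fun _ Tk ω => min (U ω) (hit X Gosc ε Tk cap ω)) k with hT
    have hT0 : T 0 = fun _ => (0:ℝ) := rfl
    have hTsucc : ∀ k, T (k+1) = fun ω => min (U ω) (hit X Gosc ε (T k) cap ω) := fun k => rfl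
    -- basic properties of the partition, by induction
    have hTle : ∀ k ω, 0 ≤ T k ω ∧ T k ω ≤ U ω := by
      intro k
      induction k with
      | zero => exact fun ω => ⟨le_refl 0, hU0 ω⟩
      | succ k ih =>
        intro ω
        rw [hTsucc k]
        constructor
        · exact le_min (hU0 ω) ((ih ω).1.trans (le_hit ω ((ih ω).2.trans (hUcap ω))))
        · exact min_le_left _ _
    have hTcap : ∀ k ω, T k ω ≤ cap := fun k ω => (hTle k ω).2.trans (hUcap ω)
    have hTst : ∀ k, IsStoppingTime ℱ (wt (T k)) := by
      intro k
      induction k with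
      | zero => exact isStoppingTime_const ℱ 0
      | succ k ih =>
        rw [hTsucc k]
        exact wt_min hUst (hit_isStoppingTime hXc hXa hGosc_cont ih (hTcap k))
    have hTmono : ∀ k ω, T k ω ≤ T (k+1) ω := by
      intro k ω
      rw [hTsucc k]
      exact le_min (hTle k ω).2 (le_hit ω (hTcap k ω))
    -- oscillation bound on each step
    have hosc : ∀ k ω, |M (T (k+1) ω) ω - M (T k ω) ω| ≤ ε ∧
        |Q (T (k+1) ω) ω - Q (T k ω) ω| ≤ ε := by
      intro k ω
      have hmem : T (k+1) ω ∈ Icc (T k ω) (hit X Gosc ε (T k) cap ω) := by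
        refine ⟨hTmono k ω, ?_⟩
        rw [hTsucc k]
        exact min_le_right _ _
      have h := hit_cont_le hXc hGosc_cont ω (hTcap k ω) (by
        simp only [hGosc, sub_self, abs_zero, max_self]; exact hε.le) hmem
      simp only [hGosc, hX, max_le_iff] at h
      exact ⟨h.1, h.2⟩
    have hQstep : ∀ k ω, 0 ≤ Q (T (k+1) ω) ω - Q (T k ω) ω := fun k ω =>
      sub_nonneg.mpr (hQmono ω (hTmono k ω))
    -- |M (T k)| ≤ k ε
    have hMbd : ∀ k ω, |M (T k ω) ω| ≤ k * ε := by
      intro k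
      induction k with
      | zero => intro ω; simp [hT0, hM0 ω]
      | succ k ih =>
        intro ω
        have h1 := (hosc k ω).1
        have h2 := ih ω
        have : |M (T (k+1) ω) ω| ≤ |M (T k ω) ω| + ε := by
          have := abs_sub_abs_le_abs_sub (M (T (k+1) ω) ω) (M (T k ω) ω)
          linarith
        push_cast
        linarith
    -- `X ≤ g` along the partition
    have hZbd : ∀ k ω, lam * M (T k ω) ω - lam ^ 2 / 2 * Q (T k ω) ω ≤ g := fun k ω =>
      hXle ω _ ⟨(hTle k ω).1, (hTle k ω).2⟩
    -- measurability package at each partition time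
    have hsvmeas : ∀ k, Measurable[(hTst k).measurableSpace] (stoppedValue X (wt (T k))) :=
      fun k => measurable_stoppedValue hprogX (hTst k)
    have hmkmeas : ∀ k, Measurable[(hTst k).measurableSpace] (fun ω => M (T k ω) ω) :=
      fun k => measurable_fst.comp (hsvmeas k)
    have hqkmeas : ∀ k, Measurable[(hTst k).measurableSpace] (fun ω => Q (T k ω) ω) :=
      fun k => measurable_snd.comp (hsvmeas k)
    -- the exponential along the partition
    set Z : ℕ → Ω → ℝ := fun k ω => Real.exp (lam * M (T k ω) ω - lam ^ 2 / 2 * Q (T k ω) ω)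
      with hZ
    have hZmeas : ∀ k, StronglyMeasurable[(hTst k).measurableSpace] (Z k) := by
      intro k
      refine Measurable.stronglyMeasurable ?_
      exact (Real.measurable_exp.comp
        (((hmkmeas k).const_mul lam).sub (((hqkmeas k).const_mul (lam ^ 2 / 2)))))
    have hZpos : ∀ k ω, 0 < Z k ω := fun k ω => Real.exp_pos _
    have hZle : ∀ k ω, Z k ω ≤ Real.exp g := fun k ω => Real.exp_le_exp.mpr (hZbd k ω)
    have hZabs : ∀ k ω, |Z k ω| ≤ Real.exp g := fun k ω => by
      rw [abs_of_pos (hZpos k ω)]; exact hZle k ω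
    have hZaem : ∀ k, AEStronglyMeasurable (Z k) P := fun k =>
      ((hZmeas k).mono ((hTst k).measurableSpace_le_of_le (wt_le (hTcap k)))).aestronglyMeasurable
    have hZint : ∀ k, Integrable (Z k) P := fun k =>
      intbdd (Z k) (Real.exp g) (hZaem k) (hZabs k)
    -- integrability of building blocks
    have hmkaem : ∀ k, AEStronglyMeasurable (fun ω => M (T k ω) ω) P := fun k =>
      (((hmkmeas k).stronglyMeasurable).mono
        ((hTst k).measurableSpace_le_of_le (wt_le (hTcap k)))).aestronglyMeasurable
    have hqkaem : ∀ k, AEStronglyMeasurable (fun ω => Q (T k ω) ω) P := fun k =>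
      (((hqkmeas k).stronglyMeasurable).mono
        ((hTst k).measurableSpace_le_of_le (wt_le (hTcap k)))).aestronglyMeasurable
    have hqkbd : ∀ k ω, |Q (T k ω) ω| ≤ k * ε := by
      intro k
      induction k with
      | zero => intro ω; simp [hT0, hQ0 ω]
      | succ k ih =>
        intro ω
        have h1 := (hosc k ω).2
        have h2 := ih ω
        have : |Q (T (k+1) ω) ω| ≤ |Q (T k ω) ω| + ε := by
          have := abs_sub_abs_le_abs_sub (Q (T (k+1) ω) ω) (Q (T k ω) ω)
          linarith
        push_cast
        linarith
    have hqkint : ∀ k, Integrable (fun ω => Q (T k ω) ω) P := fun k =>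
      intbdd _ (k * ε) (hqkaem k) (hqkbd k)
    -- the one-step inequality
    have hstep : ∀ k, ∫ ω, Z (k+1) ω ∂P ≤ ∫ ω, Z k ω ∂P +
        13 * η / 2 * lam ^ 2 * Real.exp g *
          ((∫ ω, Q (T (k+1) ω) ω ∂P) - ∫ ω, Q (T k ω) ω ∂P) := by
      intro k
      set m1 : Ω → ℝ := fun ω => M (T k ω) ω with hm1
      set m2 : Ω → ℝ := fun ω => M (T (k+1) ω) ω with hm2
      set q1 : Ω → ℝ := fun ω => Q (T k ω) ω with hq1
      set q2 : Ω → ℝ := fun ω => Q (T (k+1) ω) ω with hq2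
      set Y : Ω → ℝ := Z k with hYdef
      set a : Ω → ℝ := fun ω => lam * (m2 ω - m1 ω) with ha
      set b : Ω → ℝ := fun ω => lam ^ 2 / 2 * (q2 ω - q1 ω) with hb
      -- pointwise bounds
      have hosc1 : ∀ ω, |m2 ω - m1 ω| ≤ ε := fun ω => (hosc k ω).1
      have hosc2 : ∀ ω, |q2 ω - q1 ω| ≤ ε := fun ω => (hosc k ω).2
      have hq21nn : ∀ ω, 0 ≤ q2 ω - q1 ω := fun ω => hQstep k ω
      have ha_bd : ∀ ω, |a ω| ≤ lam * ε := fun ω => by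
        rw [ha]; dsimp only
        rw [abs_mul, abs_of_pos hlam]
        exact mul_le_mul_of_nonneg_left (hosc1 ω) hlam.le
      have hb_bd : ∀ ω, |b ω| ≤ lam ^ 2 / 2 * ε := fun ω => by
        rw [hb]; dsimp only
        rw [abs_mul, abs_of_nonneg (by positivity : (0:ℝ) ≤ lam ^ 2 / 2)]
        exact mul_le_mul_of_nonneg_left (hosc2 ω) (by positivity)
      have hb_nn : ∀ ω, 0 ≤ b ω := fun ω => by
        rw [hb]; dsimp only
        exact mul_nonneg (by positivity) (hq21nn ω)
      have haη : ∀ ω, |a ω| ≤ η := fun ω => (ha_bd ω).trans (by rw [hη_def]; nlinarith)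
      have hbη : ∀ ω, b ω ≤ η := fun ω => (le_abs_self _).trans ((hb_bd ω).trans
        (by rw [hη_def]; nlinarith))
      -- measurability
      have hYsm : StronglyMeasurable[(hTst k).measurableSpace] Y := hZmeas k
      have hY'sm : StronglyMeasurable[(hTst k).measurableSpace] (fun ω => Y ω * m1 ω) :=
        hYsm.mul ((hmkmeas k).stronglyMeasurable)
      have hYaem : AEStronglyMeasurable Y P := hZaem k
      have hm1aem : AEStronglyMeasurable m1 P := hmkaem k
      have hm2aem : AEStronglyMeasurable m2 P := hmkaem (k+1)
      have hq1aem : AEStronglyMeasurable q1 P := hqkaem k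
      have hq2aem : AEStronglyMeasurable q2 P := hqkaem (k+1)
      have haaem : AEStronglyMeasurable a P := (hm2aem.sub hm1aem).const_mul lam
      have hbaem : AEStronglyMeasurable b P := (hq2aem.sub hq1aem).const_mul (lam ^ 2 / 2)
      have hsq1aem : AEStronglyMeasurable (fun ω => m1 ω ^ 2) P :=
        (hm1aem.mul hm1aem).congr (Filter.Eventually.of_forall fun ω => by
          simp only [Pi.mul_apply]; ring)
      have hsq2aem : AEStronglyMeasurable (fun ω => m2 ω ^ 2) P :=
        (hm2aem.mul hm2aem).congr (Filter.Eventually.of_forall fun ω => by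
          simp only [Pi.mul_apply]; ring)
      -- sampling₂ identities
      have hY'bd : ∀ ω, |Y ω * m1 ω| ≤ Real.exp g * (k * ε) := fun ω => by
        rw [abs_mul]
        exact mul_le_mul (hZabs k ω) (hMbd k ω) (abs_nonneg _) (Real.exp_pos g).le
      have I1 : ∫ ω, Y ω * m2 ω ∂P = ∫ ω, Y ω * m1 ω ∂P :=
        sampling₂ M hM hMcont (hTst k) (hTst (k+1)) (hTmono k) (hTcap (k+1)) hYsm (hZabs k)
      have I2 : ∫ ω, Y ω * (m2 ω ^ 2 - q2 ω) ∂P = ∫ ω, Y ω * (m1 ω ^ 2 - q1 ω) ∂P :=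
        sampling₂ N hNmart hNcont (hTst k) (hTst (k+1)) (hTmono k) (hTcap (k+1)) hYsm (hZabs k)
      have I3 : ∫ ω, (Y ω * m1 ω) * m2 ω ∂P = ∫ ω, (Y ω * m1 ω) * m1 ω ∂P :=
        sampling₂ M hM hMcont (hTst k) (hTst (k+1)) (hTmono k) (hTcap (k+1)) hY'sm hY'bd
      -- integrability of all the pieces
      have hexpg0 : (0:ℝ) < Real.exp g := Real.exp_pos g
      have intY : Integrable Y P := hZint k
      have intYm1 : Integrable (fun ω => Y ω * m1 ω) P :=
        intbdd _ (Real.exp g * (k * ε)) (hYaem.mul hm1aem) hY'bd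
      have intYm2 : Integrable (fun ω => Y ω * m2 ω) P :=
        intbdd _ (Real.exp g * ((k+1) * ε)) (hYaem.mul hm2aem) (fun ω => by
          rw [abs_mul]
          refine mul_le_mul (hZabs k ω) ?_ (abs_nonneg _) hexpg0.le
          exact_mod_cast hMbd (k+1) ω)
      have hNbd : ∀ (j : ℕ) (ω : Ω), |M (T j ω) ω ^ 2 - Q (T j ω) ω| ≤ (j*ε)^2 + j*ε := by
        intro j ω
        have h1 := abs_le.mp (hMbd j ω)
        have h2 := abs_le.mp (hqkbd j ω)
        rw [abs_le]
        constructor <;> nlinarith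
      have intYN2 : Integrable (fun ω => Y ω * (m2 ω ^ 2 - q2 ω)) P :=
        intbdd _ (Real.exp g * (((k+1:ℕ)*ε)^2 + (k+1:ℕ)*ε))
          (hYaem.mul (hsq2aem.sub hq2aem)) (fun ω => by
            rw [abs_mul]
            exact mul_le_mul (hZabs k ω) (hNbd (k+1) ω) (abs_nonneg _) hexpg0.le)
      have intYN1 : Integrable (fun ω => Y ω * (m1 ω ^ 2 - q1 ω)) P :=
        intbdd _ (Real.exp g * ((k*ε)^2 + k*ε))
          (hYaem.mul (hsq1aem.sub hq1aem)) (fun ω => by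
            rw [abs_mul]
            exact mul_le_mul (hZabs k ω) (hNbd k ω) (abs_nonneg _) hexpg0.le)
      have intYq : Integrable (fun ω => Y ω * (q2 ω - q1 ω)) P :=
        intbdd _ (Real.exp g * ε) (hYaem.mul (hq2aem.sub hq1aem)) (fun ω => by
          rw [abs_mul]
          exact mul_le_mul (hZabs k ω) (hosc2 ω) (abs_nonneg _) hexpg0.le)
      have intY'm2 : Integrable (fun ω => (Y ω * m1 ω) * m2 ω) P :=
        intbdd _ ((Real.exp g * (k * ε)) * ((k+1)*ε))
          ((hYaem.mul hm1aem).mul hm2aem) (fun ω => by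
            rw [abs_mul]
            refine mul_le_mul (hY'bd ω) ?_ (abs_nonneg _) ?_
            · exact_mod_cast hMbd (k+1) ω
            · positivity)
      have intY'm1 : Integrable (fun ω => (Y ω * m1 ω) * m1 ω) P :=
        intbdd _ ((Real.exp g * (k * ε)) * (k*ε))
          ((hYaem.mul hm1aem).mul hm1aem) (fun ω => by
            rw [abs_mul]
            refine mul_le_mul (hY'bd ω) (hMbd k ω) (abs_nonneg _) ?_
            positivity)
      have intYa : Integrable (fun ω => Y ω * a ω) P :=
        intbdd _ (Real.exp g * (lam * ε)) (hYaem.mul haaem) (fun ω => by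
          rw [abs_mul]
          exact mul_le_mul (hZabs k ω) (ha_bd ω) (abs_nonneg _) hexpg0.le)
      have intYa2 : Integrable (fun ω => Y ω * a ω ^ 2) P :=
        intbdd _ (Real.exp g * (lam * ε) ^ 2)
          (hYaem.mul ((haaem.mul haaem).congr
            (Filter.Eventually.of_forall fun ω => by simp only [Pi.mul_apply]; ring))) (fun ω => by
          rw [abs_mul]
          refine mul_le_mul (hZabs k ω) ?_ (abs_nonneg _) hexpg0.le
          rw [abs_pow]
          exact pow_le_pow_left₀ (abs_nonneg _) (ha_bd ω) 2)
      have intYb : Integrable (fun ω => Y ω * b ω) P :=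
        intbdd _ (Real.exp g * (lam ^ 2 / 2 * ε)) (hYaem.mul hbaem) (fun ω => by
          rw [abs_mul]
          exact mul_le_mul (hZabs k ω) (hb_bd ω) (abs_nonneg _) hexpg0.le)
      -- key integral identities
      set J : ℝ := ∫ ω, Y ω * (q2 ω - q1 ω) ∂P with hJ
      have E1 : ∫ ω, Y ω * a ω ∂P = 0 := by
        have hfun : (fun ω => Y ω * a ω)
            = fun ω => lam * (Y ω * m2 ω) - lam * (Y ω * m1 ω) := by
          funext ω; rw [ha]; dsimp only; ring
        rw [hfun, integral_sub (intYm2.const_mul lam) (intYm1.const_mul lam),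
          integral_const_mul, integral_const_mul, I1, sub_self]
      have E2 : ∫ ω, Y ω * (m2 ω - m1 ω) ^ 2 ∂P = J := by
        have intD1 : Integrable
            (fun ω => Y ω * (m2 ω ^ 2 - q2 ω) - Y ω * (m1 ω ^ 2 - q1 ω)) P := intYN2.sub intYN1
        have intD2 : Integrable
            (fun ω => (Y ω * m1 ω) * m2 ω - (Y ω * m1 ω) * m1 ω) P := intY'm2.sub intY'm1
        have intD3 : Integrable
            (fun ω => (Y ω * (m2 ω ^ 2 - q2 ω) - Y ω * (m1 ω ^ 2 - q1 ω))
              + Y ω * (q2 ω - q1 ω)) P := intD1.add intYq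
        have intD4 : Integrable
            (fun ω => 2 * ((Y ω * m1 ω) * m2 ω - (Y ω * m1 ω) * m1 ω)) P := intD2.const_mul 2
        have hfun : (fun ω => Y ω * (m2 ω - m1 ω) ^ 2)
            = fun ω => ((Y ω * (m2 ω ^ 2 - q2 ω) - Y ω * (m1 ω ^ 2 - q1 ω))
              + Y ω * (q2 ω - q1 ω))
              - 2 * ((Y ω * m1 ω) * m2 ω - (Y ω * m1 ω) * m1 ω) := by
          funext ω; ring
        have i1 : ∫ ω, (Y ω * (m2 ω ^ 2 - q2 ω) - Y ω * (m1 ω ^ 2 - q1 ω)) ∂P = 0 := by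
          rw [integral_sub intYN2 intYN1, I2, sub_self]
        have i2 : ∫ ω, ((Y ω * m1 ω) * m2 ω - (Y ω * m1 ω) * m1 ω) ∂P = 0 := by
          rw [integral_sub intY'm2 intY'm1, I3, sub_self]
        rw [hfun, integral_sub intD3 intD4, integral_add intD1 intYq,
          integral_const_mul, i1, i2]
        simp [hJ]
      have E3 : ∫ ω, Y ω * a ω ^ 2 ∂P = lam ^ 2 * J := by
        have hfun : (fun ω => Y ω * a ω ^ 2)
            = fun ω => lam ^ 2 * (Y ω * (m2 ω - m1 ω) ^ 2) := by
          funext ω; rw [ha]; dsimp only; ring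
        rw [hfun, integral_const_mul, E2]
      have E4 : ∫ ω, Y ω * b ω ∂P = lam ^ 2 / 2 * J := by
        have hfun : (fun ω => Y ω * b ω)
            = fun ω => lam ^ 2 / 2 * (Y ω * (q2 ω - q1 ω)) := by
          funext ω; rw [hb]; dsimp only; ring
        rw [hfun, integral_const_mul, hJ]
      have Jnn : 0 ≤ J := integral_nonneg fun ω =>
        mul_nonneg (hZpos k ω).le (hq21nn ω)
      have Jle : J ≤ Real.exp g * ((∫ ω, q2 ω ∂P) - ∫ ω, q1 ω ∂P) := by
        have h1 : J ≤ ∫ ω, Real.exp g * (q2 ω - q1 ω) ∂P := by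
          refine integral_mono intYq (((hqkint (k+1)).sub (hqkint k)).const_mul _) fun ω => ?_
          exact mul_le_mul_of_nonneg_right (hZle k ω) (hq21nn ω)
        rw [integral_const_mul, integral_sub (hqkint (k+1)) (hqkint k)] at h1
        exact h1
      -- the pointwise exponential bound
      have hpt : ∀ ω, Z (k+1) ω ≤ Y ω *
          (1 + a ω + (1/2 + 4*η) * a ω ^ 2 + (5*η - 1) * b ω) := by
        intro ω
        have hprod : Z (k+1) ω = Y ω * Real.exp (a ω - b ω) := by
          rw [hYdef]
          show Real.exp (lam * M (T (k+1) ω) ω - lam ^ 2 / 2 * Q (T (k+1) ω) ω) = _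
          rw [← Real.exp_add]
          congr 1
          rw [ha, hb]
          dsimp only
          ring
        rw [hprod]
        refine mul_le_mul_of_nonneg_left ?_ (hZpos k ω).le
        exact step_bound (haη ω) (hb_nn ω) (hbη ω) hεhalf
      -- put everything together
      have intS1 : Integrable (fun ω => Y ω + Y ω * a ω) P := intY.add intYa
      have intS1' : Integrable (fun ω => (1/2 + 4*η) * (Y ω * a ω ^ 2)) P :=
        intYa2.const_mul _
      have intS2 : Integrable
          (fun ω => (Y ω + Y ω * a ω) + (1/2 + 4*η) * (Y ω * a ω ^ 2)) P := intS1.add intS1'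
      have intS2' : Integrable (fun ω => (5*η - 1) * (Y ω * b ω)) P := intYb.const_mul _
      have intRHS : Integrable (fun ω => Y ω *
          (1 + a ω + (1/2 + 4*η) * a ω ^ 2 + (5*η - 1) * b ω)) P := by
        have hfun : (fun ω => Y ω * (1 + a ω + (1/2 + 4*η) * a ω ^ 2 + (5*η - 1) * b ω))
            = fun ω => ((Y ω + Y ω * a ω) + (1/2 + 4*η) * (Y ω * a ω ^ 2))
              + (5*η - 1) * (Y ω * b ω) := by
          funext ω; ring
        rw [hfun]
        exact intS2.add intS2'
      have hImono : ∫ ω, Z (k+1) ω ∂P ≤ ∫ ω, Y ω *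
          (1 + a ω + (1/2 + 4*η) * a ω ^ 2 + (5*η - 1) * b ω) ∂P :=
        integral_mono (hZint (k+1)) intRHS hpt
      have hIexp : ∫ ω, Y ω * (1 + a ω + (1/2 + 4*η) * a ω ^ 2 + (5*η - 1) * b ω) ∂P
          = ∫ ω, Y ω ∂P + 13 * η / 2 * lam ^ 2 * J := by
        have hfun : (fun ω => Y ω * (1 + a ω + (1/2 + 4*η) * a ω ^ 2 + (5*η - 1) * b ω))
            = fun ω => ((Y ω + Y ω * a ω) + (1/2 + 4*η) * (Y ω * a ω ^ 2))
              + (5*η - 1) * (Y ω * b ω) := by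
          funext ω; ring
        rw [hfun]
        rw [integral_add intS2 intS2', integral_add intS1 intS1',
          integral_add intY intYa, integral_const_mul, integral_const_mul,
          E1, E3, E4]
        ring
      have hfinal : ∫ ω, Z (k+1) ω ∂P ≤ ∫ ω, Y ω ∂P + 13 * η / 2 * lam ^ 2 * J := by
        rw [← hIexp]; exact hImono
      refine hfinal.trans ?_
      have hcoeff : (0:ℝ) ≤ 13 * η / 2 * lam ^ 2 := by positivity
      have h9 := mul_le_mul_of_nonneg_left Jle hcoeff
      have h10 : 13 * η / 2 * lam ^ 2 * (Real.exp g * ((∫ ω, q2 ω ∂P) - ∫ ω, q1 ω ∂P))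
          = 13 * η / 2 * lam ^ 2 * Real.exp g * ((∫ ω, q2 ω ∂P) - ∫ ω, q1 ω ∂P) := by
        ring
      linarith [h9, h10]
    -- telescoping
    have htel : ∀ K, ∫ ω, Z K ω ∂P ≤ 1 + 13 * η / 2 * lam ^ 2 * Real.exp g *
        ∫ ω, Q (T K ω) ω ∂P := by
      intro K
      induction K with
      | zero =>
        have h1 : ∀ ω, Z 0 ω = 1 := fun ω => by
          simp [hZ, hT0, hM0 ω, hQ0 ω]
        have h2 : ∀ ω, Q (T 0 ω) ω = 0 := fun ω => by simp [hT0, hQ0 ω]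
        simp [funext h1, funext h2]
      | succ K ih =>
        have := hstep K
        nlinarith [this, ih]
    have hQTlecap : ∀ K, ∫ ω, Q (T K ω) ω ∂P ≤ Vq := by
      intro K
      refine integral_mono (hqkint K) hQint fun ω => ?_
      exact hQmono ω (hTcap K ω)
    have hconst : 0 ≤ 13 * η / 2 * lam ^ 2 * Real.exp g := by positivity
    have htel2 : ∀ K, ∫ ω, Z K ω ∂P ≤ 1 + 13 * η / 2 * lam ^ 2 * Real.exp g * Vq := by
      intro K
      refine (htel K).trans ?_
      have := hQTlecap K
      nlinarith
    -- pointwise convergence Z K → Z_U  (the partition stabilizes)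
    have hstab : ∀ ω, ∃ K0 : ℕ, ∀ K, K0 ≤ K → T K ω = U ω := by
      intro ω
      obtain ⟨δ, hδ0, hδ⟩ := Metric.uniformContinuousOn_iff.mp
        (isCompact_Icc.uniformContinuousOn_of_continuous ((hXc ω).continuousOn)) ε hε
      have hprogress : ∀ k, T (k+1) ω < U ω → T k ω + δ ≤ T (k+1) ω := by
        intro k hlt
        have h1 : hit X Gosc ε (T k) cap ω < U ω := by
          by_contra h
          push_neg at h
          rw [hTsucc k] at hlt
          simp only [min_eq_left h] at hlt
          exact absurd hlt (lt_irrefl _)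
        have h2 : T (k+1) ω = hit X Gosc ε (T k) cap ω := by
          rw [hTsucc k]; exact min_eq_right h1.le
        have hcap' : hit X Gosc ε (T k) cap ω < cap := h1.trans_le (hUcap ω)
        have hG := hit_not hXc hGosc_cont ω (hTcap k ω) hcap'
        rw [hGosc_dist] at hG
        have hmem1 : hit X Gosc ε (T k) cap ω ∈ Icc (0:ℝ) cap :=
          ⟨(hTle k ω).1.trans (le_hit ω (hTcap k ω)), hit_le_cap ω (hTcap k ω)⟩
        have hmem2 : T k ω ∈ Icc (0:ℝ) cap := ⟨(hTle k ω).1, hTcap k ω⟩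
        by_contra hcon
        push_neg at hcon
        have hdist : dist (hit X Gosc ε (T k) cap ω) (T k ω) < δ := by
          rw [Real.dist_eq, abs_of_nonneg (sub_nonneg.mpr (le_hit ω (hTcap k ω)))]
          rw [h2] at hcon
          linarith
        exact absurd (hδ _ hmem1 _ hmem2 hdist) (not_lt.mpr hG)
      have hlow : ∀ k : ℕ, min (U ω) (k * δ) ≤ T k ω := by
        intro k
        induction k with
        | zero =>
          simp only [Nat.cast_zero, zero_mul, hT0]
          exact min_le_right _ _
        | succ k ih =>
          rcases eq_or_lt_of_le (hTle (k+1) ω).2 with heq | hlt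
          · rw [heq]; exact min_le_left _ _
          · have h3 := hprogress k hlt
            push_cast
            rcases le_total (U ω) (k * δ) with h4 | h4
            · rw [min_eq_left h4] at ih
              exact (min_le_left _ _).trans (by linarith)
            · rw [min_eq_right h4] at ih
              exact (min_le_right _ _).trans (by push_cast; linarith)
      refine ⟨⌈cap / δ⌉₊, fun K hK => ?_⟩
      have h1 : cap ≤ K * δ := by
        have h2 : cap / δ ≤ (⌈cap / δ⌉₊ : ℝ) := Nat.le_ceil _
        have h3 : ((⌈cap / δ⌉₊ : ℕ) : ℝ) ≤ (K : ℝ) := Nat.cast_le.mpr hK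
        rw [div_le_iff₀ hδ0] at h2
        nlinarith
      have h2 : U ω ≤ K * δ := (hUcap ω).trans h1
      have h5 := hlow K
      rw [min_eq_left h2] at h5
      exact le_antisymm (hTle K ω).2 h5
    have hptconv : ∀ ω, Tendsto (fun K => Z K ω) atTop
        (𝓝 (Real.exp (lam * M (U ω) ω - lam ^ 2 / 2 * Q (U ω) ω))) := by
      intro ω
      obtain ⟨K0, hK0⟩ := hstab ω
      refine tendsto_atTop_of_eventually_const (i₀ := K0) fun K hK => ?_
      simp only [hZ, hK0 K hK]
    -- dominated convergence
    have hdom : Tendsto (fun K => ∫ ω, Z K ω ∂P) atTop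
        (𝓝 (∫ ω, Real.exp (lam * M (U ω) ω - lam ^ 2 / 2 * Q (U ω) ω) ∂P)) := by
      refine tendsto_integral_of_dominated_convergence (fun _ => Real.exp g) hZaem
        (integrable_const _) (fun K => Filter.Eventually.of_forall fun ω => by
          rw [Real.norm_eq_abs]; exact hZabs K ω)
        (Filter.Eventually.of_forall hptconv)
    exact le_of_tendsto hdom (Filter.Eventually.of_forall htel2)
  -- let ε → 0
  set I : ℝ := ∫ ω, Real.exp (lam * M (U ω) ω - lam ^ 2 / 2 * Q (U ω) ω) ∂P with hI
  by_contra hcon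
  push_neg at hcon
  set c0 : ℝ := lam + lam ^ 2 / 2 with hc0
  have hc0pos : 0 < c0 := by positivity
  set A : ℝ := 13 * c0 / 2 * lam ^ 2 * Real.exp g * Vq with hA
  have hApos : 0 ≤ A := by positivity
  set ε : ℝ := min (1 / (2 * c0)) ((I - 1) / (A + 1)) with hεdef
  have hIpos : 0 < I - 1 := by linarith
  have hεpos : 0 < ε := by
    refine lt_min (by positivity) (by positivity)
  have hεhalf : c0 * ε ≤ 1 / 2 := by
    have h1 : ε ≤ 1 / (2 * c0) := min_le_left _ _
    calc c0 * ε ≤ c0 * (1 / (2 * c0)) := by nlinarith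
      _ = 1 / 2 := by
        rw [mul_one_div, mul_comm]
        rw [div_eq_div_iff (by positivity) (by norm_num)]
        ring
  have hkey := keyε ε hεpos hεhalf
  have h2 : 13 * (c0 * ε) / 2 * lam ^ 2 * Real.exp g * Vq = A * ε := by
    rw [hA]; ring
  have hkey2 : I ≤ 1 + A * ε := by
    rw [← h2]; exact hkey
  have h3 : ε ≤ (I - 1) / (A + 1) := min_le_right _ _
  have h4 : A * ε ≤ A * ((I - 1) / (A + 1)) := by nlinarith
  have h5 : A * ((I - 1) / (A + 1)) < I - 1 := by
    rw [mul_div_assoc', div_lt_iff₀ (show (0:ℝ) < A + 1 by positivity)]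
    nlinarith
  linarith

end Core

end Stmt7Aux

open Stmt7Aux in
set_option maxHeartbeats 1600000 in
/-- generalized Bernstein inequality: let `M` be a real, continuous, square
integrable martingale with `M 0 = 0` and quadratic variation `[M] = Q` (characterized by:
`M² - Q` is a martingale, `Q` is continuous, nondecreasing, `Q 0 = 0`). For `β ≥ 0`,
`C > 0`, any bounded stopping time `τ` and any `ℓ > 0`,
`P( sup_{t ≤ τ} M_t > ℓ , [M]_τ ≤ β sup_{t ≤ τ} M_t + C ) ≤ exp(-ℓ²/(2(βℓ + C)))`. -/
theorem stmt_7 {Ω : Type*} {m : MeasurableSpace Ω} {P : Measure Ω} [IsProbabilityMeasure P]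
    (ℱ : Filtration ℝ m) (M Q : ℝ → Ω → ℝ)
    (hM : Martingale M ℱ P)
    (hMcont : ∀ ω, Continuous fun t => M t ω)
    (hM0 : ∀ ω, M 0 ω = 0)
    (hML2 : ∀ t, MemLp (M t) 2 P)
    (hQV : Martingale (fun t ω => (M t ω) ^ 2 - Q t ω) ℱ P)
    (hQcont : ∀ ω, Continuous fun t => Q t ω)
    (hQmono : ∀ ω, Monotone fun t => Q t ω)
    (hQ0 : ∀ ω, Q 0 ω = 0)
    (β C : ℝ) (hβ : 0 ≤ β) (hC : 0 < C)
    (τ : Ω → ℝ) (hτ : IsStoppingTime ℱ (fun ω => (τ ω : WithTop ℝ))) (hτnn : ∀ ω, 0 ≤ τ ω)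
    (hτbdd : ∃ Tb : ℝ, ∀ ω, τ ω ≤ Tb)
    (ℓ : ℝ) (hℓ : 0 < ℓ) :
    P {ω | ℓ < sSup ((fun t => M t ω) '' Icc 0 (τ ω)) ∧
        Q (τ ω) ω ≤ β * sSup ((fun t => M t ω) '' Icc 0 (τ ω)) + C} ≤
      ENNReal.ofReal (Real.exp (-ℓ ^ 2 / (2 * (β * ℓ + C)))) := by
  classical
  obtain ⟨Tb, hTb⟩ := hτbdd
  set cap : ℝ := max Tb 0 with hcapdef
  have hcap0 : (0:ℝ) ≤ cap := le_max_right _ _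
  have hτcap : ∀ ω, τ ω ≤ cap := fun ω => (hTb ω).trans (le_max_left _ _)
  have hK : 0 < β * ℓ + C := by nlinarith [mul_nonneg hβ hℓ.le]
  set lam : ℝ := ℓ / (β * ℓ + C) with hlamdef
  have hlam : 0 < lam := div_pos hℓ hK
  set g : ℝ := ℓ ^ 2 / (2 * (β * ℓ + C)) with hgdef
  have hg : 0 < g := by positivity
  -- the pair process and its properties
  set X : ℝ → Ω → ℝ × ℝ := fun t ω => (M t ω, Q t ω) with hX
  have hXc : ∀ ω, Continuous fun t => X t ω := fun ω => (hMcont ω).prodMk (hQcont ω)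
  have hQad : StronglyAdapted ℱ Q := by
    intro t
    have h1 := hM.stronglyAdapted t
    have h2 := hQV.stronglyAdapted t
    have h3 : Q t = fun ω => M t ω * M t ω - (M t ω ^ 2 - Q t ω) := by ext ω; ring
    rw [h3]
    exact (h1.mul h1).sub h2
  have hXa : StronglyAdapted ℱ X := fun t => (hM.stronglyAdapted t).prodMk (hQad t)
  have hprogX : ProgMeasurable ℱ X := hXa.progMeasurable_of_continuous hXc
  -- the hitting time of level g by `lam M - lam²/2 Q`
  set Gρ : ℝ × ℝ → ℝ × ℝ → ℝ := fun p _ => lam * p.1 - lam ^ 2 / 2 * p.2 with hGρ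
  have hGρc : Continuous fun p : (ℝ × ℝ) × (ℝ × ℝ) => Gρ p.1 p.2 :=
    (continuous_const.mul continuous_fst.fst).sub
      (continuous_const.mul continuous_fst.snd)
  set ρ : Ω → ℝ := hit X Gρ g (fun _ => 0) cap with hρ
  have hρst : IsStoppingTime ℱ (wt ρ) :=
    hit_isStoppingTime hXc hXa hGρc (isStoppingTime_const ℱ 0) fun _ => hcap0
  have hρ0 : ∀ ω, 0 ≤ ρ ω := fun ω =>
    le_hit (X := X) (G := Gρ) (c := g) (S := fun _ => 0) (cap := cap) ω hcap0
  have hρcap : ∀ ω, ρ ω ≤ cap := fun ω =>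
    hit_le_cap (X := X) (G := Gρ) (c := g) (S := fun _ => 0) (cap := cap) ω hcap0
  set U : Ω → ℝ := fun ω => min (ρ ω) (τ ω) with hU
  have hUst : IsStoppingTime ℱ (wt U) := wt_min hρst hτ
  have hU0 : ∀ ω, 0 ≤ U ω := fun ω => le_min (hρ0 ω) (hτnn ω)
  have hUcap : ∀ ω, U ω ≤ cap := fun ω => (min_le_left _ _).trans (hρcap ω)
  -- start value of the scanning function
  have hstart : ∀ ω : Ω, Gρ (X ((fun _ : Ω => (0:ℝ)) ω) ω) (X ((fun _ : Ω => (0:ℝ)) ω) ω) ≤ g := by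
    intro ω
    show lam * M 0 ω - lam ^ 2 / 2 * Q 0 ω ≤ g
    rw [hM0 ω, hQ0 ω]
    simpa using hg.le
  -- `lam M - lam²/2 Q ≤ g` on `[0, U]`
  have hXle : ∀ ω, ∀ t ∈ Icc 0 (U ω), lam * M t ω - lam ^ 2 / 2 * Q t ω ≤ g := by
    intro ω t ht
    have h := hit_cont_le hXc hGρc ω hcap0 (hstart ω)
      (t := t) ⟨ht.1, ht.2.trans (min_le_left _ _)⟩
    exact h
  -- integrability of Q cap
  have hQcapint : Integrable (Q cap) P := by
    have h1 : Integrable (fun ω => M cap ω ^ 2 - Q cap ω) P := hQV.integrable cap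
    have h2 : Integrable (fun ω => M cap ω ^ 2) P := (hML2 cap).integrable_sq
    have h3 : Q cap = fun ω => M cap ω ^ 2 - (M cap ω ^ 2 - Q cap ω) := by ext ω; ring
    rw [h3]
    exact h2.sub h1
  -- the core exponential bound
  have hEZ : ∫ ω, Real.exp (lam * M (U ω) ω - lam ^ 2 / 2 * Q (U ω) ω) ∂P ≤ 1 :=
    core M Q hM hMcont hM0 hQV hQcont hQmono hQ0 hlam hg hcap0 hQcapint hUst hU0 hUcap hXle
  -- event inclusion
  set Z : Ω → ℝ := fun ω => Real.exp (lam * M (U ω) ω - lam ^ 2 / 2 * Q (U ω) ω) with hZ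
  have hincl : {ω | ℓ < sSup ((fun t => M t ω) '' Icc 0 (τ ω)) ∧
      Q (τ ω) ω ≤ β * sSup ((fun t => M t ω) '' Icc 0 (τ ω)) + C}
      ⊆ {ω | Real.exp g ≤ Z ω} := by
    intro ω hω
    obtain ⟨h1, h2⟩ := hω
    have himg : IsCompact ((fun t => M t ω) '' Icc 0 (τ ω)) :=
      isCompact_Icc.image (hMcont ω)
    have hne : ((fun t => M t ω) '' Icc 0 (τ ω)).Nonempty :=
      (nonempty_Icc.mpr (hτnn ω)).image _
    obtain ⟨u, hu, hMu⟩ := himg.sSup_mem hne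
    set Sm : ℝ := sSup ((fun t => M t ω) '' Icc 0 (τ ω)) with hSm
    have hQu : Q u ω ≤ Q (τ ω) ω := hQmono ω hu.2
    have h3 : Q u ω ≤ β * Sm + C := hQu.trans h2
    -- the value at time u is at least g
    have hkey : lam * Sm - lam ^ 2 / 2 * (β * Sm + C) - g
        = (Sm - ℓ) * (lam - lam ^ 2 * β / 2) := by
      rw [hlamdef, hgdef]
      field_simp
      ring
    have hlb : lam * β < 2 := by
      rw [hlamdef, div_mul_eq_mul_div, div_lt_iff₀ hK]
      nlinarith
    have h4 : 0 ≤ lam - lam ^ 2 * β / 2 := by nlinarith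
    have hpos : 0 ≤ (Sm - ℓ) * (lam - lam ^ 2 * β / 2) :=
      mul_nonneg (by linarith) h4
    have hval : g ≤ lam * M u ω - lam ^ 2 / 2 * Q u ω := by
      have hMu' : M u ω = Sm := hMu
      rw [hMu']
      have h5 := mul_le_mul_of_nonneg_left h3 (show (0:ℝ) ≤ lam ^ 2 / 2 by positivity)
      linarith
    -- hence the hitting time comes before u, and U = ρ
    have humem : u ∈ Icc ((fun _ : Ω => (0:ℝ)) ω) cap := ⟨hu.1, hu.2.trans (hτcap ω)⟩
    have hval' : g ≤ Gρ (X u ω) (X ((fun _ : Ω => (0:ℝ)) ω) ω) := hval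
    have hρu : ρ ω ≤ u := hit_le ω hcap0 humem hval'
    have hhit : g ≤ Gρ (X (ρ ω) ω) (X ((fun _ : Ω => (0:ℝ)) ω) ω) :=
      hit_hits hXc hGρc ω hcap0 ⟨u, humem, hval'⟩
    have hUρ : U ω = ρ ω := min_eq_left (hρu.trans hu.2)
    show Real.exp g ≤ Z ω
    rw [hZ]
    dsimp only
    rw [hUρ]
    exact Real.exp_le_exp.mpr hhit
  -- measurability and boundedness of Z
  have hZsm : AEStronglyMeasurable Z P := by
    have hsv : StronglyMeasurable[ℱ cap] (stoppedValue X (wt U)) :=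
      stronglyMeasurable_stoppedValue_of_le hprogX hUst (wt_le hUcap)
    have hφ : Continuous fun p : ℝ × ℝ => Real.exp (lam * p.1 - lam ^ 2 / 2 * p.2) :=
      Real.continuous_exp.comp
        ((continuous_const.mul continuous_fst).sub (continuous_const.mul continuous_snd))
    exact ((hφ.comp_stronglyMeasurable hsv).mono (ℱ.le cap)).aestronglyMeasurable
  have hZbdd : ∀ ω, Z ω ≤ Real.exp g := fun ω =>
    Real.exp_le_exp.mpr (hXle ω (U ω) ⟨hU0 ω, le_refl _⟩)
  have hZint : Integrable Z P := by
    refine (integrable_const (Real.exp g)).mono' hZsm ?_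
    refine Filter.Eventually.of_forall fun ω => ?_
    rw [Real.norm_eq_abs, abs_of_pos (Real.exp_pos _)]
    exact hZbdd ω
  -- Markov inequality
  have hmark := mul_meas_ge_le_integral_of_nonneg
    (Filter.Eventually.of_forall fun ω => (Real.exp_pos _).le : 0 ≤ᵐ[P] Z) hZint (Real.exp g)
  have hPA : (P {ω | Real.exp g ≤ Z ω}).toReal ≤ Real.exp (-g) := by
    have h6 : Real.exp g * (P {ω | Real.exp g ≤ Z ω}).toReal ≤ 1 := hmark.trans hEZ
    rw [Real.exp_neg, inv_eq_one_div, le_div_iff₀ (Real.exp_pos g)]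
    nlinarith [h6]
  have hfin : P {ω | Real.exp g ≤ Z ω} ≤ ENNReal.ofReal (Real.exp (-g)) := by
    have h7 : P {ω | Real.exp g ≤ Z ω} = ENNReal.ofReal ((P {ω | Real.exp g ≤ Z ω}).toReal) :=
      (ENNReal.ofReal_toReal (measure_ne_top P _)).symm
    rw [h7]
    exact ENNReal.ofReal_le_ofReal hPA
  refine (measure_mono hincl).trans (hfin.trans ?_)
  have h8 : -g = -ℓ ^ 2 / (2 * (β * ℓ + C)) := by rw [hgdef]; ring
  rw [h8]
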